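/- Let k be an algebraically closed field, let n ≥ 1, and let I be a radical homogeneous ideal of A := k[x₀, …, xₙ] such that the Krull dimension of A/I is at least 2. Let Y := V₊(I) ⊆ ℙⁿ(k) and Z_Y := {g ∈ GL_{n+1}(k) : Y ∩ gY ≠ ∅}. Then the core Z_Y° := ⋂_{g ∈ GL_{n+1}(k)} g·Z_Y·g⁻¹ contains every h ∈ GL_{n+1}(k) with rank(h − 1) ≤ 1. Equivalently: for all g, h ∈ GL_{n+1}(k) with rank(h − 1) ≤ 1, there exists v ∈ k^{n+1}, v ≠ 0, such that f(v) = 0 and f((g⁻¹hg)⁻¹·v) = 0 for every f ∈ I. -/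

import Mathlib

set_option synthInstance.maxHeartbeats 400000

set_option maxHeartbeats 1000000 in
lemma exists_chain3 {R : Type*} [CommRing R] (hdim : 2 ≤ ringKrullDim R) :
    ∃ p₀ p₁ p₂ : PrimeSpectrum R, p₀ < p₁ ∧ p₁ < p₂ := by
  by_contra hcon
  push_neg at hcon
  have hle : ∀ p : LTSeries (PrimeSpectrum R), (p.length : WithBot (WithTop ℕ)) ≤ 1 := by
    intro p
    by_contra hlen
    push_neg at hlen
    have h2 : 2 ≤ p.length := by exact_mod_cast hlen
    have h01 : p ⟨0, by omega⟩ < p ⟨1, by omega⟩ := p.strictMono (by simp [Fin.lt_def])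
    have h12 : p ⟨1, by omega⟩ < p ⟨2, by omega⟩ := p.strictMono (by simp [Fin.lt_def])
    exact hcon _ _ _ h01 h12
  have : ringKrullDim R ≤ 1 := iSup_le hle
  have := hdim.trans this
  norm_num at this

set_option maxHeartbeats 1000000 in
open MvPolynomial in
lemma homComp_mul_lin {σ R : Type*} [CommRing R] {ℓ : MvPolynomial σ R}
    (hl : ℓ.IsHomogeneous 1) (w : MvPolynomial σ R) {d : ℕ} (hd : 1 ≤ d) :
    homogeneousComponent d (ℓ * w) = ℓ * homogeneousComponent (d - 1) w := by
  conv_lhs => rw [← sum_homogeneousComponent w, Finset.mul_sum, map_sum]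
  have key : ∀ e : ℕ, homogeneousComponent d (ℓ * homogeneousComponent e w)
      = if e = d - 1 then ℓ * homogeneousComponent e w else 0 := by
    intro e
    have hhom : (ℓ * homogeneousComponent e w).IsHomogeneous (1 + e) :=
      hl.mul (homogeneousComponent_isHomogeneous e w)
    rw [homogeneousComponent_of_mem ((mem_homogeneousSubmodule _ _).mpr hhom),
      if_congr (show d = 1 + e ↔ e = d - 1 by omega) rfl rfl]
  simp only [key]
  rw [Finset.sum_ite_eq' (Finset.range (w.totalDegree + 1)) (d - 1)
    (fun e => ℓ * homogeneousComponent e w)]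
  split_ifs with hmem
  · rfl
  · rw [Finset.mem_range, not_lt] at hmem
    rw [homogeneousComponent_eq_zero _ _ (by omega), mul_zero]

set_option maxHeartbeats 1000000 in
open MvPolynomial in
lemma core_exists {k : Type*} [Field k] [IsAlgClosed k] (n : ℕ)
    (I : Ideal (MvPolynomial (Fin (n + 1)) k))
    (hhom : ∀ f ∈ I, ∀ m : ℕ, MvPolynomial.homogeneousComponent m f ∈ I)
    (hdim : 2 ≤ ringKrullDim (MvPolynomial (Fin (n + 1)) k ⧸ I))
    (c : Fin (n + 1) → k) :
    ∃ v : Fin (n + 1) → k, v ≠ 0 ∧ (∀ f ∈ I, MvPolynomial.eval v f = 0) ∧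
      ∑ i, c i * v i = 0 := by
  classical
  by_contra hcon
  push_neg at hcon
  obtain ⟨p₀, p₁, p₂, h01, h12⟩ := exists_chain3 hdim
  set ℓ : MvPolynomial (Fin (n + 1)) k := ∑ i, C (c i) * X i with hldef
  have hlhom : ℓ.IsHomogeneous 1 :=
    MvPolynomial.IsHomogeneous.sum _ _ _ fun i _ => isHomogeneous_C_mul_X _ _
  set J : Ideal (MvPolynomial (Fin (n + 1)) k) := I ⊔ Ideal.span {ℓ} with hJdef
  have hIJ : I ≤ J := le_sup_left
  have hlJ : ℓ ∈ J := Ideal.mem_sup_right (Ideal.subset_span rfl)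
  -- every variable is in the radical of J
  have hXrad : ∀ i, X i ∈ J.radical := by
    intro i
    rw [← vanishingIdeal_zeroLocus_eq_radical (K := k), mem_vanishingIdeal_iff]
    intro x hx
    rw [mem_zeroLocus_iff] at hx
    by_cases hx0 : x = 0
    · simp [hx0]
    · exfalso
      refine hcon x hx0 (fun f hf => hx f (hIJ hf)) ?_
      have := hx ℓ hlJ
      simpa [hldef] using this
  -- a uniform power
  have hXN : ∀ i, ∃ N, X i ^ N ∈ J := fun i => Ideal.mem_radical_iff.mp (hXrad i)
  choose Ni hNi using hXN
  set N : ℕ := (Finset.univ.sup Ni) + 1 with hNdef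
  have hN1 : 1 ≤ N := Nat.le_add_left 1 _
  have hXNmem : ∀ i, X i ^ N ∈ J := by
    intro i
    have hle : Ni i ≤ N := le_trans (Finset.le_sup (Finset.mem_univ i)) (Nat.le_succ _)
    have : (X i : MvPolynomial (Fin (n + 1)) k) ^ N = X i ^ Ni i * X i ^ (N - Ni i) := by
      rw [← pow_add, Nat.add_sub_cancel' hle]
    rw [this]
    exact Ideal.mul_mem_right _ _ (hNi i)
  set D : ℕ := (n + 1) * N with hDdef
  have hD1 : 1 ≤ D := Nat.one_le_iff_ne_zero.mpr (by positivity)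
  have hDsum : (n + 1) * (N - 1) + (n + 1) = D := by
    rw [hDdef]
    conv_rhs => rw [show N = (N - 1) + 1 by omega]
    rw [Nat.mul_succ]
  -- monomials of degree ≥ D lie in J
  have hmonJ : ∀ (s : Fin (n + 1) →₀ ℕ) (a : k), D ≤ s.degree → monomial s a ∈ J := by
    intro s a hs
    have hpig : ∃ i, N ≤ s i := by
      by_contra hno
      push_neg at hno
      have h1 : s.degree ≤ ∑ i : Fin (n + 1), s i :=
        Finset.sum_le_sum_of_subset (Finset.subset_univ _)
      have h2 : ∑ i : Fin (n + 1), s i ≤ ∑ _i : Fin (n + 1), (N - 1) :=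
        Finset.sum_le_sum fun i _ => by have := hno i; omega
      rw [Finset.sum_const, Finset.card_univ, Fintype.card_fin, smul_eq_mul] at h2
      omega
    obtain ⟨i, hi⟩ := hpig
    have hsingle : Finsupp.single i N ≤ s := Finsupp.single_le_iff.mpr hi
    have heq : monomial s a = X i ^ N * monomial (s - Finsupp.single i N) a := by
      rw [X_pow_eq_monomial, monomial_mul, one_mul, add_tsub_cancel_of_le hsingle]
    rw [heq]
    exact Ideal.mul_mem_right _ _ (hXNmem i)
  -- homogeneous polynomials of degree ≥ D lie in J
  have hbigJ : ∀ d, D ≤ d → ∀ f : MvPolynomial (Fin (n + 1)) k, f.IsHomogeneous d → f ∈ J := by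
    intro d hd f hf
    rw [f.as_sum]
    refine Ideal.sum_mem _ fun s hs => ?_
    refine hmonJ s _ ?_
    have : (Finsupp.weight 1) s = d := hf (mem_support_iff.mp hs)
    rw [Finsupp.degree_eq_weight_one]
    exact hd.trans_eq this.symm
  -- the algebra structure over k[t], with t acting as multiplication by ℓ
  letI : Algebra (Polynomial k) (MvPolynomial (Fin (n + 1)) k ⧸ I) :=
    (Polynomial.eval₂RingHom (algebraMap k (MvPolynomial (Fin (n + 1)) k ⧸ I))
      (Ideal.Quotient.mk I ℓ)).toAlgebra
  have halgX : algebraMap (Polynomial k) (MvPolynomial (Fin (n + 1)) k ⧸ I) Polynomial.X =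
      Ideal.Quotient.mk I ℓ := Polynomial.eval₂_X _ _
  have halgC : ∀ a : k, algebraMap (Polynomial k) (MvPolynomial (Fin (n + 1)) k ⧸ I)
      (Polynomial.C a) = Ideal.Quotient.mk I (C a) := fun a => Polynomial.eval₂_C _ _
  -- the finite spanning set
  set T : Finset (MvPolynomial (Fin (n + 1)) k ⧸ I) := Finset.image
      (fun t : Fin (n + 1) → Fin D =>
        Ideal.Quotient.mk I (monomial (Finsupp.equivFunOnFinite.symm fun i => (t i : ℕ)) 1))
      Finset.univ with hTdef
  set M : Submodule (Polynomial k) (MvPolynomial (Fin (n + 1)) k ⧸ I) :=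
    Submodule.span (Polynomial k) (T : Set (MvPolynomial (Fin (n + 1)) k ⧸ I)) with hMdef
  have claim : ∀ d, ∀ f : MvPolynomial (Fin (n + 1)) k, f.IsHomogeneous d →
      Ideal.Quotient.mk I f ∈ M := by
    intro d
    induction d using Nat.strong_induction_on with
    | _ d IH =>
      intro f hf
      by_cases hD : d < D
      · rw [f.as_sum, map_sum]
        refine Submodule.sum_mem _ fun s hs => ?_
        have hsd : s.degree = d := by
          rw [Finsupp.degree_eq_weight_one]
          exact hf (mem_support_iff.mp hs)
        have hsmall : ∀ i, s i < D := fun i =>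
          lt_of_le_of_lt (hsd ▸ Finsupp.le_degree i s) hD
        have hmem : Ideal.Quotient.mk I (monomial s 1) ∈
            (T : Set (MvPolynomial (Fin (n + 1)) k ⧸ I)) := by
          rw [hTdef, Finset.coe_image]
          refine ⟨fun i => ⟨s i, hsmall i⟩, Finset.mem_coe.mpr (Finset.mem_univ _), ?_⟩
          exact congrArg (Ideal.Quotient.mk I)
            (congrArg (fun u => monomial u (1 : k)) (Finsupp.equivFunOnFinite_symm_coe s))
        have hterm : Ideal.Quotient.mk I (monomial s (coeff s f)) =
            (Polynomial.C (coeff s f)) • Ideal.Quotient.mk I (monomial s 1) := by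
          rw [Algebra.smul_def, halgC, ← map_mul, C_mul_monomial, mul_one]
        rw [hterm]
        exact Submodule.smul_mem _ _ (Submodule.subset_span hmem)
      · push_neg at hD
        have hd1 : 1 ≤ d := le_trans hD1 hD
        have hfJ : f ∈ J := hbigJ d hD f hf
        rw [hJdef, Submodule.mem_sup] at hfJ
        obtain ⟨a, ha, b, hb, hab⟩ := hfJ
        rw [Ideal.mem_span_singleton] at hb
        obtain ⟨w, rfl⟩ := hb
        have hfd : homogeneousComponent d f = f := by
          rw [homogeneousComponent_of_mem ((mem_homogeneousSubmodule _ _).mpr hf), if_pos rfl]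
        have hsplit : f = homogeneousComponent d a + ℓ * homogeneousComponent (d - 1) w := by
          conv_lhs => rw [← hfd, ← hab]
          rw [map_add, homComp_mul_lin hlhom w hd1]
        rw [hsplit, map_add]
        refine Submodule.add_mem _ ?_ ?_
        · rw [Ideal.Quotient.eq_zero_iff_mem.mpr (hhom a ha d)]
          exact Submodule.zero_mem _
        · have h1 : Ideal.Quotient.mk I (ℓ * homogeneousComponent (d - 1) w) =
              (Polynomial.X : Polynomial k) •
                Ideal.Quotient.mk I (homogeneousComponent (d - 1) w) := by
            rw [Algebra.smul_def, halgX, ← map_mul]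
          rw [h1]
          exact Submodule.smul_mem _ _
            (IH (d - 1) (by omega) _ (homogeneousComponent_isHomogeneous _ _))
  haveI hfin : Module.Finite (Polynomial k) (MvPolynomial (Fin (n + 1)) k ⧸ I) := by
    refine ⟨⟨T, ?_⟩⟩
    rw [eq_top_iff]
    intro x _
    obtain ⟨f, rfl⟩ := Ideal.Quotient.mk_surjective x
    rw [← sum_homogeneousComponent f, map_sum]
    exact Submodule.sum_mem _ fun e _ => claim e _ (homogeneousComponent_isHomogeneous e f)
  haveI : Algebra.IsIntegral (Polynomial k) (MvPolynomial (Fin (n + 1)) k ⧸ I) :=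
    Algebra.IsIntegral.of_finite _ _
  have h01' : p₀.asIdeal < p₁.asIdeal := (PrimeSpectrum.asIdeal_lt_asIdeal _ _).mpr h01
  have h12' : p₁.asIdeal < p₂.asIdeal := (PrimeSpectrum.asIdeal_lt_asIdeal _ _).mpr h12
  obtain ⟨x01, hx01J, hx01I⟩ := SetLike.exists_of_lt h01'
  obtain ⟨x12, hx12J, hx12I⟩ := SetLike.exists_of_lt h12'
  haveI := p₀.2
  haveI := p₁.2
  haveI := p₂.2
  have hq01 : p₀.asIdeal.comap
        (algebraMap (Polynomial k) (MvPolynomial (Fin (n + 1)) k ⧸ I)) <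
      p₁.asIdeal.comap (algebraMap (Polynomial k) (MvPolynomial (Fin (n + 1)) k ⧸ I)) :=
    Ideal.comap_lt_comap_of_integral_mem_sdiff h01'.le ⟨hx01J, hx01I⟩
      (Algebra.IsIntegral.isIntegral x01)
  have hq12 : p₁.asIdeal.comap
        (algebraMap (Polynomial k) (MvPolynomial (Fin (n + 1)) k ⧸ I)) <
      p₂.asIdeal.comap (algebraMap (Polynomial k) (MvPolynomial (Fin (n + 1)) k ⧸ I)) :=
    Ideal.comap_lt_comap_of_integral_mem_sdiff h12'.le ⟨hx12J, hx12I⟩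
      (Algebra.IsIntegral.isIntegral x12)
  haveI : (p₁.asIdeal.comap
      (algebraMap (Polynomial k) (MvPolynomial (Fin (n + 1)) k ⧸ I))).IsPrime :=
    Ideal.IsPrime.comap _
  haveI : (p₂.asIdeal.comap
      (algebraMap (Polynomial k) (MvPolynomial (Fin (n + 1)) k ⧸ I))).IsPrime :=
    Ideal.IsPrime.comap _
  have hq1bot : p₁.asIdeal.comap
      (algebraMap (Polynomial k) (MvPolynomial (Fin (n + 1)) k ⧸ I)) ≠ ⊥ := by
    intro hbot
    rw [hbot] at hq01
    exact not_lt_bot hq01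
  have hmax := IsPrime.to_maximal_ideal hq1bot
  exact absurd (hmax.eq_of_le (Ideal.IsPrime.ne_top inferInstance) hq12.le) hq12.ne


open Matrix in
lemma row_control {k : Type*} [Field k] {m : ℕ} (E : Matrix (Fin m) (Fin m) k)
    (hrk : E.rank ≤ 1) :
    ∃ c : Fin m → k, ∀ v : Fin m → k, ∑ j, c j * v j = 0 → E.mulVec v = 0 := by
  classical
  by_cases hE : E = 0
  · exact ⟨0, fun v _ => by simp [hE]⟩
  · have hrow : ∀ i : Fin m, E i ∈ LinearMap.range (Eᵀ.mulVecLin) := by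
      intro i
      refine ⟨Pi.single i 1, ?_⟩
      funext j
      simp [Matrix.mulVecLin_apply, Matrix.mulVec, dotProduct, Pi.single_apply,
        Matrix.transpose_apply, Finset.sum_ite_eq']
    obtain ⟨i0, hi0⟩ : ∃ i0, E i0 ≠ 0 := by
      by_contra hall
      push_neg at hall
      exact hE (by funext i j; rw [hall i]; rfl)
    set W := LinearMap.range (Eᵀ.mulVecLin) with hW
    have hfr : Module.finrank k W ≤ 1 := by
      have : Module.finrank k W = Eᵀ.rank := rfl
      rw [this, Matrix.rank_transpose]
      exact hrk
    set x : W := ⟨E i0, hrow i0⟩ with hx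
    have hx0 : x ≠ 0 := by
      intro hxx
      apply hi0
      have := congrArg (Subtype.val) hxx
      exact this
    have hspanle : Submodule.span k {x} ≤ ⊤ := le_top
    have hfr1 : Module.finrank k (Submodule.span k {x}) = 1 := finrank_span_singleton hx0
    have htop : Submodule.span k {x} = ⊤ := by
      apply Submodule.eq_top_of_finrank_eq
      have h1 : 1 ≤ Module.finrank k W := by
        have := Submodule.finrank_le (Submodule.span k {x} : Submodule k W)
        omega
      have : Module.finrank k W = 1 := le_antisymm hfr h1
      rw [hfr1, this]
    have hcoef : ∀ i : Fin m, ∃ a : k, E i = a • E i0 := by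
      intro i
      have : (⟨E i, hrow i⟩ : W) ∈ Submodule.span k {x} := htop ▸ Submodule.mem_top
      obtain ⟨a, ha⟩ := Submodule.mem_span_singleton.mp this
      refine ⟨a, ?_⟩
      have := congrArg (Subtype.val) ha
      simp only [SetLike.mk_smul_mk] at this
      exact this.symm
    choose a ha using hcoef
    refine ⟨E i0, fun v hv => ?_⟩
    funext i
    have : E.mulVec v i = ∑ j, E i j * v j := rfl
    rw [this, Pi.zero_apply]
    have h2 : ∀ j, E i j = a i * E i0 j := fun j => by rw [ha i]; rfl
    calc ∑ j, E i j * v j = ∑ j, a i * (E i0 j * v j) := by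
          refine Finset.sum_congr rfl fun j _ => by rw [h2 j]; ring
      _ = a i * ∑ j, E i0 j * v j := by rw [Finset.mul_sum]
      _ = 0 := by rw [hv, mul_zero]


/-- If `Y = V₊(I) ⊆ ℙⁿ(k)` has dimension ≥ 1 then the core `Z_Y° = ⋂_g g·Z_Y·g⁻¹` of the
intersection obstruction contains every `h` with `rank(h − 1) ≤ 1`: for all `g`,
`Y ∩ (g⁻¹hg)Y ≠ ∅`. -/
theorem stmt_7 {k : Type*} [Field k] [IsAlgClosed k] (n : ℕ) (hn : 1 ≤ n)
    (I : Ideal (MvPolynomial (Fin (n + 1)) k))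
    (hrad : I.IsRadical)
    (hhom : ∀ f ∈ I, ∀ m : ℕ, MvPolynomial.homogeneousComponent m f ∈ I)
    (hdim : 2 ≤ ringKrullDim (MvPolynomial (Fin (n + 1)) k ⧸ I))
    (g h : Matrix.GeneralLinearGroup (Fin (n + 1)) k)
    (hrk : ((h : Matrix (Fin (n + 1)) (Fin (n + 1)) k) - 1).rank ≤ 1) :
    ∃ v : Fin (n + 1) → k, v ≠ 0 ∧
      (∀ f ∈ I, MvPolynomial.eval v f = 0) ∧
      (∀ f ∈ I, MvPolynomial.eval
        ((((g⁻¹ * h * g)⁻¹ : Matrix.GeneralLinearGroup (Fin (n + 1)) k) :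
          Matrix (Fin (n + 1)) (Fin (n + 1)) k).mulVec v) f = 0) := by
  classical
  set Nmat : Matrix (Fin (n + 1)) (Fin (n + 1)) k :=
    ((g⁻¹ * h * g : Matrix.GeneralLinearGroup (Fin (n + 1)) k) :
      Matrix (Fin (n + 1)) (Fin (n + 1)) k) with hNdef
  have hNrank : (Nmat - 1).rank ≤ 1 := by
    have hfact : Nmat - 1 =
        ((g⁻¹ : Matrix.GeneralLinearGroup (Fin (n + 1)) k) : Matrix (Fin (n + 1)) (Fin (n + 1)) k)
          * ((h : Matrix (Fin (n + 1)) (Fin (n + 1)) k) - 1)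
          * ((g : Matrix.GeneralLinearGroup (Fin (n + 1)) k) :
              Matrix (Fin (n + 1)) (Fin (n + 1)) k) := by
      have hinv : ((g⁻¹ : Matrix.GeneralLinearGroup (Fin (n + 1)) k) :
          Matrix (Fin (n + 1)) (Fin (n + 1)) k) * (g : Matrix (Fin (n + 1)) (Fin (n + 1)) k) = 1 :=
        Units.inv_mul g
      rw [hNdef, Units.val_mul, Units.val_mul]
      have expand : (((g⁻¹ : Matrix.GeneralLinearGroup (Fin (n + 1)) k) :
            Matrix (Fin (n + 1)) (Fin (n + 1)) k)
          * ((h : Matrix (Fin (n + 1)) (Fin (n + 1)) k) - 1)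
          * ((g : Matrix.GeneralLinearGroup (Fin (n + 1)) k) :
              Matrix (Fin (n + 1)) (Fin (n + 1)) k))
          = ((g⁻¹ : Matrix.GeneralLinearGroup (Fin (n + 1)) k) :
              Matrix (Fin (n + 1)) (Fin (n + 1)) k)
            * (h : Matrix (Fin (n + 1)) (Fin (n + 1)) k)
            * (g : Matrix.GeneralLinearGroup (Fin (n + 1)) k)
            - ((g⁻¹ : Matrix.GeneralLinearGroup (Fin (n + 1)) k) :
              Matrix (Fin (n + 1)) (Fin (n + 1)) k)
            * (g : Matrix.GeneralLinearGroup (Fin (n + 1)) k) := by noncomm_ring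
      rw [expand, hinv]
    rw [hfact]
    exact le_trans (Matrix.rank_mul_le_left _ _) (le_trans (Matrix.rank_mul_le_right _ _) hrk)
  obtain ⟨c, hc⟩ := row_control (Nmat - 1) hNrank
  obtain ⟨v, hv0, hvI, hvc⟩ := core_exists n I hhom hdim c
  refine ⟨v, hv0, hvI, ?_⟩
  have hNv : Nmat.mulVec v = v := by
    have h0 : (Nmat - 1).mulVec v = 0 := hc v hvc
    rw [Matrix.sub_mulVec, Matrix.one_mulVec, sub_eq_zero] at h0
    exact h0
  have hMv : (((g⁻¹ * h * g)⁻¹ : Matrix.GeneralLinearGroup (Fin (n + 1)) k) :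
      Matrix (Fin (n + 1)) (Fin (n + 1)) k).mulVec v = v := by
    conv_lhs => rw [← hNv]
    rw [Matrix.mulVec_mulVec]
    have : (((g⁻¹ * h * g)⁻¹ : Matrix.GeneralLinearGroup (Fin (n + 1)) k) :
        Matrix (Fin (n + 1)) (Fin (n + 1)) k) * Nmat = 1 := Units.inv_mul _
    rw [this, Matrix.one_mulVec]
  rw [hMv]
  exact hvI
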